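/- Let M1, M2, M3, M4 be matrices over GF(2) with M1, M3 of size c×(c+k) and M2, M4 of size c×(c+k), satisfying M1 M2ᵀ + M2 M1ᵀ = 0, M3 M4ᵀ + M4 M3ᵀ = 0, and M1 M4ᵀ + M2 M3ᵀ = I_c. Write M1 = [M11 M12] and M2 = [M21 M22] and M3 = [M31 M32] and M4 = [M41 M42] with first blocks c×c and second blocks c×k, and assume M11 is invertible. Then the matrix W = M31 M11⁻¹ + (M42 + M31 M11⁻¹ M22)(M32 + M31 M11⁻¹ M12)ᵀ is symmetric over GF(2). -/

import Mathlib

open Matrix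

theorem stmt5 (c k : ℕ)
    (M11 M21 M31 M41 : Matrix (Fin c) (Fin c) (ZMod 2))
    (M12 M22 M32 M42 : Matrix (Fin c) (Fin k) (ZMod 2))
    (M1 M2 M3 M4 : Matrix (Fin c) (Fin c ⊕ Fin k) (ZMod 2))
    (h1 : M1 = fromCols M11 M12) (h2 : M2 = fromCols M21 M22)
    (h3 : M3 = fromCols M31 M32) (h4 : M4 = fromCols M41 M42)
    (hc1 : M1 * M2ᵀ + M2 * M1ᵀ = 0)
    (hc2 : M3 * M4ᵀ + M4 * M3ᵀ = 0)
    (hc3 : M1 * M4ᵀ + M2 * M3ᵀ = 1)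
    (hinv : IsUnit M11) :
    (M31 * M11⁻¹ + (M42 + M31 * M11⁻¹ * M22) * (M32 + M31 * M11⁻¹ * M12)ᵀ).IsSymm := by
  subst h1 h2 h3 h4
  simp only [transpose_fromCols, fromCols_mul_fromRows] at hc1 hc2 hc3
  have hdet : IsUnit M11.det := (Matrix.isUnit_iff_isUnit_det M11).mp hinv
  set N := M11⁻¹ with hNdef
  have hNr : M11 * N = 1 := Matrix.mul_nonsing_inv _ hdet
  have hNl : N * M11 = 1 := Matrix.nonsing_inv_mul _ hdet
  have hNrT : M11ᵀ * Nᵀ = 1 := by rw [← transpose_mul, hNl, transpose_one]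
  have addself : ∀ X : Matrix (Fin c) (Fin c) (ZMod 2), X + X = 0 := by
    intro X; ext i j
    simp only [Matrix.add_apply, Matrix.zero_apply]
    exact CharTwo.add_self_eq_zero _
  have shift : ∀ A B : Matrix (Fin c) (Fin c) (ZMod 2), A + B = 0 → A = B := by
    intro A B h
    have h2 : A + B + B = 0 + B := by rw [h]
    rwa [add_assoc, addself, add_zero, zero_add] at h2
  have hsmZ : ∀ X : Matrix (Fin c) (Fin c) (ZMod 2), (2:ℤ) • X = 0 := by
    intro X; ext i j
    simp only [Matrix.smul_apply, Matrix.zero_apply, zsmul_eq_mul]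
    have : ((2:ℤ) : ZMod 2) = 0 := by decide
    rw [this, zero_mul]
  have hN2 : ∀ X : Matrix (Fin c) (Fin c) (ZMod 2), N * (M11 * X) = X := by
    intro X; rw [← Matrix.mul_assoc, hNl, Matrix.one_mul]
  have hNT2 : ∀ X : Matrix (Fin c) (Fin c) (ZMod 2), M11ᵀ * (Nᵀ * X) = X := by
    intro X; rw [← Matrix.mul_assoc, hNrT, Matrix.one_mul]
  have e1 : M42 * M32ᵀ + M32 * M42ᵀ = M31 * M41ᵀ + M41 * M31ᵀ := by
    apply shift
    have h : (M42 * M32ᵀ + M32 * M42ᵀ) + (M31 * M41ᵀ + M41 * M31ᵀ)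
        = M31 * M41ᵀ + M32 * M42ᵀ + (M41 * M31ᵀ + M42 * M32ᵀ) := by abel
    rw [h, hc2]
  have e4 : M22 * M12ᵀ + M12 * M22ᵀ = M11 * M21ᵀ + M21 * M11ᵀ := by
    apply shift
    have h : (M22 * M12ᵀ + M12 * M22ᵀ) + (M11 * M21ᵀ + M21 * M11ᵀ)
        = M11 * M21ᵀ + M12 * M22ᵀ + (M21 * M11ᵀ + M22 * M12ᵀ) := by abel
    rw [h, hc1]
  have e2 : M12 * M42ᵀ + M22 * M32ᵀ = 1 + M11 * M41ᵀ + M21 * M31ᵀ := by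
    apply shift
    have h : (M12 * M42ᵀ + M22 * M32ᵀ) + (1 + M11 * M41ᵀ + M21 * M31ᵀ)
        = (M11 * M41ᵀ + M12 * M42ᵀ + (M21 * M31ᵀ + M22 * M32ᵀ)) + 1 := by abel
    rw [h, hc3, addself]
  have e3 : M42 * M12ᵀ + M32 * M22ᵀ = 1 + M41 * M11ᵀ + M31 * M21ᵀ := by
    have h := congrArg Matrix.transpose e2
    simpa [Matrix.transpose_add, Matrix.transpose_mul, Matrix.transpose_one,
      Matrix.transpose_transpose] using h
  have hPQ : (M42 + M31 * N * M22) * (M32 + M31 * N * M12)ᵀ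
      + (M32 + M31 * N * M12) * (M42 + M31 * N * M22)ᵀ
      = M31 * N + (M31 * N)ᵀ := by
    have expand : (M42 + M31 * N * M22) * (M32 + M31 * N * M12)ᵀ
        + (M32 + M31 * N * M12) * (M42 + M31 * N * M22)ᵀ
        = (M42 * M32ᵀ + M32 * M42ᵀ) + M31 * N * (M12 * M42ᵀ + M22 * M32ᵀ)
          + (M42 * M12ᵀ + M32 * M22ᵀ) * (Nᵀ * M31ᵀ)
          + M31 * N * ((M22 * M12ᵀ + M12 * M22ᵀ) * (Nᵀ * M31ᵀ)) := by
      simp only [Matrix.transpose_add, Matrix.transpose_mul, Matrix.transpose_transpose,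
        Matrix.mul_add, Matrix.add_mul, Matrix.mul_assoc]
      abel
    rw [expand, e1, e2, e3, e4]
    rw [← sub_eq_zero]
    simp only [Matrix.mul_add, Matrix.add_mul, Matrix.mul_one, Matrix.one_mul,
      Matrix.mul_assoc, hN2, hNT2, Matrix.transpose_mul]
    abel_nf
    simp [hsmZ]
  rw [Matrix.IsSymm]
  apply shift
  have hT : (M31 * N + (M42 + M31 * N * M22) * (M32 + M31 * N * M12)ᵀ)ᵀ
      = (M31 * N)ᵀ + (M32 + M31 * N * M12) * (M42 + M31 * N * M22)ᵀ := by
    simp [Matrix.transpose_add, Matrix.transpose_mul, Matrix.transpose_transpose]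
  rw [hT]
  have h : (M31 * N)ᵀ + (M32 + M31 * N * M12) * (M42 + M31 * N * M22)ᵀ
      + (M31 * N + (M42 + M31 * N * M22) * (M32 + M31 * N * M12)ᵀ)
      = ((M42 + M31 * N * M22) * (M32 + M31 * N * M12)ᵀ
        + (M32 + M31 * N * M12) * (M42 + M31 * N * M22)ᵀ)
        + (M31 * N + (M31 * N)ᵀ) := by abel
  rw [h, hPQ, addself]
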